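/- Let Q ∈ ℝ[X_1,…,X_n] be homogeneous of degree d, written Q = ∑_{|α|=d} c_α X^α, and let Q⁺ := ∑_{|α|=d} |c_α| X^α. Then for every g ∈ ℕ and every x ∈ ℝⁿ with x_i ≥ 0 for all i: ∑_{s ∈ ℕⁿ, g ≤ |s| ≤ d} (1/∏_{i=1}^n s_i!) · x^s · | (∂^{|s|}Q/∂X^s)(x) | ≤ 2^d · Q⁺(x). -/

import Mathlib

open Finset

/-- The iterated formal partial derivative `∏ i (∂/∂X_i)^(s i)` applied to `Q`. -/
noncomputable def iterPderiv {n : ℕ} (s : Fin n → ℕ)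
    (Q : MvPolynomial (Fin n) ℝ) : MvPolynomial (Fin n) ℝ :=
  (List.finRange n).foldr
    (fun i acc => (((MvPolynomial.pderiv i).toLinearMap) ^ (s i)) acc) Q

open MvPolynomial

lemma pow_pderiv_monomial {n : ℕ} (i : Fin n) (k : ℕ) (α : Fin n →₀ ℕ) (c : ℝ) :
    (((MvPolynomial.pderiv i).toLinearMap) ^ k) (MvPolynomial.monomial α c)
      = MvPolynomial.monomial (α - Finsupp.single i k) (c * ((α i).descFactorial k : ℝ)) := by
  induction k with
  | zero => simp
  | succ k ih =>
    rw [pow_succ']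
    simp only [Module.End.mul_apply, ih, Derivation.coeFn_coe, pderiv_monomial]
    have h1 : (α - Finsupp.single i k) i = α i - k := by
      simp [Finsupp.tsub_apply]
    have h2 : α - Finsupp.single i k - Finsupp.single i 1 = α - Finsupp.single i (k+1) := by
      rw [tsub_tsub, ← Finsupp.single_add]
    rw [h1, h2, mul_assoc, ← Nat.cast_mul, mul_comm ((α i).descFactorial k),
      ← Nat.descFactorial_succ]

lemma foldr_pderiv_eq_linearMap {n : ℕ} (s : Fin n → ℕ) (l : List (Fin n))
    (Q : MvPolynomial (Fin n) ℝ) :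
    l.foldr (fun i acc => (((MvPolynomial.pderiv i).toLinearMap) ^ (s i)) acc) Q
      = (l.foldr (fun i acc => (((MvPolynomial.pderiv i).toLinearMap) ^ (s i)) * acc)
          (1 : Module.End ℝ (MvPolynomial (Fin n) ℝ))) Q := by
  induction l with
  | nil => simp
  | cons h t ih => simp [List.foldr_cons, ih]

lemma foldr_pderiv_monomial {n : ℕ} (s : Fin n → ℕ) (l : List (Fin n)) (hl : l.Nodup)
    (α : Fin n →₀ ℕ) (c : ℝ) :
    l.foldr (fun i acc => (((MvPolynomial.pderiv i).toLinearMap) ^ (s i)) acc)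
        (MvPolynomial.monomial α c)
      = MvPolynomial.monomial (α - ∑ i ∈ l.toFinset, Finsupp.single i (s i))
          (c * ∏ i ∈ l.toFinset, ((α i).descFactorial (s i) : ℝ)) := by
  induction l with
  | nil => simp
  | cons h t ih =>
    rw [List.nodup_cons] at hl
    rw [List.foldr_cons, ih hl.2, pow_pderiv_monomial]
    have hh : h ∉ t.toFinset := by simpa using hl.1
    have hS : (∑ i ∈ t.toFinset, Finsupp.single i (s i)) h = 0 := by
      rw [Finset.sum_apply']
      exact Finset.sum_eq_zero fun i hi => Finsupp.single_eq_of_ne (by rintro rfl; exact hh hi)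
    have h1 : (α - ∑ i ∈ t.toFinset, Finsupp.single i (s i)) h = α h := by
      simp [Finsupp.tsub_apply, hS]
    rw [h1, List.toFinset_cons, Finset.sum_insert hh, Finset.prod_insert hh, tsub_tsub]
    ring_nf
    rw [add_comm (Finsupp.single h (s h))]

lemma eval_iterPderiv {n : ℕ} (s : Fin n → ℕ) (Q : MvPolynomial (Fin n) ℝ) (x : Fin n → ℝ) :
    MvPolynomial.eval x (iterPderiv s Q)
      = ∑ α ∈ Q.support, Q.coeff α * (∏ i, ((α i).descFactorial (s i) : ℝ))
          * ∏ i, x i ^ (α i - s i) := by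
  have hmono : ∀ (α : Fin n →₀ ℕ) (c : ℝ),
      iterPderiv s (monomial α c)
        = monomial (α - ∑ i, Finsupp.single i (s i))
            (c * ∏ i, ((α i).descFactorial (s i) : ℝ)) := by
    intro α c
    rw [iterPderiv, foldr_pderiv_monomial s _ (List.nodup_finRange n)]
    simp [List.toFinset_finRange]
  have hsub : ∀ (α : Fin n →₀ ℕ) (i : Fin n),
      (α - ∑ j, Finsupp.single j (s j)) i = α i - s i := by
    intro α i
    have : (∑ j, Finsupp.single j (s j) : Fin n →₀ ℕ) i = s i := by
      rw [Finset.sum_apply']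
      simp [Finsupp.single_apply]
    simp [Finsupp.tsub_apply, this]
  conv_lhs => rw [← Q.support_sum_monomial_coeff]
  have hlin : iterPderiv s (∑ α ∈ Q.support, monomial α (Q.coeff α))
      = ∑ α ∈ Q.support, iterPderiv s (monomial α (Q.coeff α)) := by
    rw [iterPderiv, foldr_pderiv_eq_linearMap, map_sum]
    refine Finset.sum_congr rfl fun α _ => ?_
    rw [iterPderiv, foldr_pderiv_eq_linearMap]
  rw [hlin, map_sum]
  refine Finset.sum_congr rfl fun α _ => ?_
  rw [hmono, eval_monomial, Finsupp.prod_pow]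
  simp only [hsub]

lemma factor_le (m k : ℕ) (y : ℝ) (hy : 0 ≤ y) :
    (k.factorial : ℝ)⁻¹ * (y ^ k) * ((m.descFactorial k : ℝ) * y ^ (m - k))
      ≤ (m.choose k : ℝ) * y ^ m := by
  rcases le_or_gt k m with h | h
  · rw [Nat.descFactorial_eq_factorial_mul_choose]
    push_cast
    rw [show (k.factorial : ℝ)⁻¹ * y ^ k * (k.factorial * m.choose k * y ^ (m - k))
        = (k.factorial * (k.factorial : ℝ)⁻¹) * (m.choose k * (y ^ k * y ^ (m - k))) by ring,
      mul_inv_cancel₀ (by exact_mod_cast k.factorial_ne_zero), one_mul, ← pow_add,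
      Nat.add_sub_cancel' h]
  · rw [Nat.descFactorial_eq_zero_iff_lt.2 h]
    simp
    positivity

lemma sum_choose_le (m d : ℕ) (h : m ≤ d) :
    ∑ k ∈ Finset.range (d + 1), m.choose k = 2 ^ m := by
  rw [← Nat.sum_range_choose m]
  exact (Finset.sum_subset (Finset.range_subset_range.2 (by omega))
    (fun k _ hk => Nat.choose_eq_zero_of_lt (by simp at hk ⊢; omega))).symm

theorem stmt17 {n : ℕ} (d : ℕ) (Q : MvPolynomial (Fin n) ℝ) (hQ : Q.IsHomogeneous d)
    (g : ℕ) (x : Fin n → ℝ) (hx : ∀ i, 0 ≤ x i) :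
    (∑ t : Fin n → Fin (d + 1),
        if g ≤ ∑ i, (t i : ℕ) ∧ ∑ i, (t i : ℕ) ≤ d then
          (1 / ∏ i, (((t i : ℕ)).factorial : ℝ)) * (∏ i, x i ^ (t i : ℕ)) *
            |MvPolynomial.eval x (iterPderiv (fun i => (t i : ℕ)) Q)|
        else 0)
    ≤ 2 ^ d * ∑ α ∈ Q.support, |Q.coeff α| * ∏ i, x i ^ α i := by
  -- degree facts
  have hdeg : ∀ α ∈ Q.support, ∑ i, α i = d := by
    intro α hα
    have h1 : Finsupp.weight 1 α = d := hQ (MvPolynomial.mem_support_iff.mp hα)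
    replace h1 : Finsupp.degree α = d := by rw [Finsupp.degree_eq_weight_one]; exact h1
    rw [← h1, Finsupp.degree_apply]
    exact (Finset.sum_subset (Finset.subset_univ _)
      (fun i _ hi => Finsupp.notMem_support_iff.mp hi)).symm
  have key : ∀ t : Fin n → Fin (d + 1),
      (if g ≤ ∑ i, (t i : ℕ) ∧ ∑ i, (t i : ℕ) ≤ d then
          (1 / ∏ i, (((t i : ℕ)).factorial : ℝ)) * (∏ i, x i ^ (t i : ℕ)) *
            |MvPolynomial.eval x (iterPderiv (fun i => (t i : ℕ)) Q)|
        else 0)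
      ≤ ∑ α ∈ Q.support, |Q.coeff α| *
          ∏ i, (((α i).choose (t i) : ℝ) * x i ^ (α i)) := by
    intro t
    set s : Fin n → ℕ := fun i => (t i : ℕ) with hs
    have hRHS : 0 ≤ ∑ α ∈ Q.support, |Q.coeff α| *
        ∏ i, (((α i).choose (s i) : ℝ) * x i ^ (α i)) := by
      refine Finset.sum_nonneg fun α _ => mul_nonneg (abs_nonneg _) ?_
      exact Finset.prod_nonneg fun i _ => mul_nonneg (Nat.cast_nonneg _)
        (pow_nonneg (hx i) _)
    split_ifs with h
    · -- main bound
      have habs : |MvPolynomial.eval x (iterPderiv s Q)|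
          ≤ ∑ α ∈ Q.support, |Q.coeff α| * (∏ i, ((α i).descFactorial (s i) : ℝ))
              * ∏ i, x i ^ (α i - s i) := by
        rw [eval_iterPderiv]
        refine (Finset.abs_sum_le_sum_abs _ _).trans (le_of_eq ?_)
        refine Finset.sum_congr rfl fun α _ => ?_
        rw [abs_mul, abs_mul,
          abs_of_nonneg (Finset.prod_nonneg fun i _ => (Nat.cast_nonneg _ : (0:ℝ) ≤ _)),
          abs_of_nonneg (Finset.prod_nonneg fun i _ => pow_nonneg (hx i) _)]
      have hC : (0:ℝ) ≤ (1 / ∏ i, ((s i).factorial : ℝ)) * (∏ i, x i ^ (s i)) := by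
        refine mul_nonneg (by positivity) (Finset.prod_nonneg fun i _ => pow_nonneg (hx i) _)
      calc (1 / ∏ i, ((s i).factorial : ℝ)) * (∏ i, x i ^ (s i)) *
              |MvPolynomial.eval x (iterPderiv s Q)|
          ≤ (1 / ∏ i, ((s i).factorial : ℝ)) * (∏ i, x i ^ (s i)) *
              (∑ α ∈ Q.support, |Q.coeff α| * (∏ i, ((α i).descFactorial (s i) : ℝ))
                * ∏ i, x i ^ (α i - s i)) := by
            exact mul_le_mul_of_nonneg_left habs hC
        _ = ∑ α ∈ Q.support, |Q.coeff α| *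
              ∏ i, (((s i).factorial : ℝ)⁻¹ * x i ^ (s i) *
                (((α i).descFactorial (s i) : ℝ) * x i ^ (α i - s i))) := by
            rw [Finset.mul_sum]
            refine Finset.sum_congr rfl fun α _ => ?_
            rw [one_div, ← Finset.prod_inv_distrib, Finset.prod_mul_distrib,
              Finset.prod_mul_distrib, Finset.prod_mul_distrib]
            ring
        _ ≤ ∑ α ∈ Q.support, |Q.coeff α| *
              ∏ i, (((α i).choose (s i) : ℝ) * x i ^ (α i)) := by
            refine Finset.sum_le_sum fun α _ => ?_
            refine mul_le_mul_of_nonneg_left ?_ (abs_nonneg _)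
            refine Finset.prod_le_prod (fun i _ => mul_nonneg (mul_nonneg (inv_nonneg.2 (Nat.cast_nonneg _)) (pow_nonneg (hx i) _)) (mul_nonneg (Nat.cast_nonneg _) (pow_nonneg (hx i) _))) fun i _ => ?_
            exact factor_le (α i) (s i) (x i) (hx i)
    · exact hRHS
  refine (Finset.sum_le_sum fun t _ => key t).trans (le_of_eq ?_)
  rw [Finset.sum_comm]
  rw [Finset.mul_sum]
  refine Finset.sum_congr rfl fun α hα => ?_
  have hαd : ∀ i, α i ≤ d := by
    intro i
    rw [← hdeg α hα]
    exact Finset.single_le_sum (fun j _ => Nat.zero_le _) (Finset.mem_univ i)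
  have hswap : ∑ t : Fin n → Fin (d + 1), |Q.coeff α| *
        ∏ i, (((α i).choose (t i) : ℝ) * x i ^ (α i))
      = |Q.coeff α| * ∏ i, ∑ k : Fin (d + 1), (((α i).choose k : ℝ) * x i ^ (α i)) := by
    rw [← Finset.mul_sum]
    congr 1
    rw [Finset.prod_univ_sum]
    rw [Fintype.piFinset_univ]
  rw [hswap]
  have hcol : ∀ i, ∑ k : Fin (d + 1), (((α i).choose k : ℝ) * x i ^ (α i))
      = (2:ℝ) ^ (α i) * x i ^ (α i) := by
    intro i
    rw [← Finset.sum_mul]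
    congr 1
    rw [Fin.sum_univ_eq_sum_range (fun k => (((α i).choose k : ℝ)))]
    rw [← Nat.cast_sum, sum_choose_le (α i) d (hαd i)]
    push_cast
    ring
  rw [Finset.prod_congr rfl fun i _ => hcol i, Finset.prod_mul_distrib,
    Finset.prod_pow_eq_pow_sum, hdeg α hα]
  ring
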